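/- If f ∈ S*_L, i.e., zf'(z)/f(z) ≺ √(1+z²) (lemniscate-related class of Sokół–Stankiewicz variant), then |Γ₁² - Γ₂²| ≤ 1/64 and |b₂² - b₃²| ≤ 1/16, where Γₙ are the logarithmic coefficients of f⁻¹ and bₙ its Taylor coefficients. Both bounds are sharp. -/

import Mathlib

open Complex Metric

noncomputable section

/-- A Schwarz function: analytic self-map of the unit disk fixing 0. -/
def IsSchwarz (w : ℂ → ℂ) : Prop :=
  DifferentiableOn ℂ w (ball (0:ℂ) 1) ∧ w 0 = 0 ∧ ∀ z ∈ ball (0:ℂ) 1, w z ∈ ball (0:ℂ) 1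

/-- `f` belongs to the class `𝒜` with Taylor coefficients `a`:
`f z = z + a₂ z² + a₃ z³ + ⋯` on the unit disk. -/
def InClassA (f : ℂ → ℂ) (a : ℕ → ℂ) : Prop :=
  a 0 = 0 ∧ a 1 = 1 ∧ ∀ z ∈ ball (0:ℂ) 1, HasSum (fun n => a n * z ^ n) (f z)

/-- `f ∈ 𝒮*(φ)`, i.e. `z f'(z)/f(z) ≺ φ(z)`, written without division. -/
def MemStarPhi (phi f : ℂ → ℂ) : Prop :=
  ∃ w, IsSchwarz w ∧ ∀ z ∈ ball (0:ℂ) 1, z * deriv f z = phi (w z) * f z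

/-- `f ∈ 𝒞(φ)`, i.e. `1 + z f''(z)/f'(z) ≺ φ(z)`, written without division. -/
def MemConvexPhi (phi f : ℂ → ℂ) : Prop :=
  ∃ w, IsSchwarz w ∧ ∀ z ∈ ball (0:ℂ) 1,
    deriv f z + z * deriv (deriv f) z = phi (w z) * deriv f z

/-- `φ` is a Ma–Minda function with (real) Taylor coefficients `B`:
analytic, univalent, `φ(0) = 1`, `B₁ > 0`, image in the right half-plane,
symmetric about the real axis, and starlike with respect to `1`. -/
def IsMaMinda (phi : ℂ → ℂ) (B : ℕ → ℝ) : Prop :=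
  DifferentiableOn ℂ phi (ball (0:ℂ) 1) ∧ Set.InjOn phi (ball (0:ℂ) 1) ∧
  (∀ z ∈ ball (0:ℂ) 1, HasSum (fun n => (B n : ℂ) * z ^ n) (phi z)) ∧
  B 0 = 1 ∧ 0 < B 1 ∧ (∀ z ∈ ball (0:ℂ) 1, 0 < (phi z).re) ∧
  (∀ z ∈ ball (0:ℂ) 1, phi ((starRingEnd ℂ) z) = (starRingEnd ℂ) (phi z)) ∧
  StarConvex ℝ (1 : ℂ) (phi '' ball (0:ℂ) 1)

/-- `f` is starlike of order `α` (univalent, normalized analyticity is stated separately). -/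
def IsStarlikeOfOrder (f : ℂ → ℂ) (α : ℝ) : Prop :=
  DifferentiableOn ℂ f (ball (0:ℂ) 1) ∧ Set.InjOn f (ball (0:ℂ) 1) ∧
  ∀ z ∈ ball (0:ℂ) 1, z ≠ 0 → α < (z * deriv f z / f z).re

/-- `f` is a convex function. -/
def IsConvexFun (f : ℂ → ℂ) : Prop :=
  DifferentiableOn ℂ f (ball (0:ℂ) 1) ∧ Set.InjOn f (ball (0:ℂ) 1) ∧
  ∀ z ∈ ball (0:ℂ) 1, 0 < (1 + z * deriv (deriv f) z / deriv f z).re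

/-- First logarithmic coefficient of the inverse, in terms of the coefficients of `f`. -/
def G₁ (a : ℕ → ℂ) : ℂ := -(a 2) / 2
/-- Second logarithmic coefficient of the inverse. -/
def G₂ (a : ℕ → ℂ) : ℂ := -(1/2) * (a 3 - (3/2) * a 2 ^ 2)
/-- Third logarithmic coefficient of the inverse. -/
def G₃ (a : ℕ → ℂ) : ℂ := -(1/2) * (a 4 - 4 * a 2 * a 3 + (10/3) * a 2 ^ 3)
/-- Second Taylor coefficient of the inverse function. -/
def bc₂ (a : ℕ → ℂ) : ℂ := -(a 2)
/-- Third Taylor coefficient of the inverse function. -/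
def bc₃ (a : ℕ → ℂ) : ℂ := 2 * a 2 ^ 2 - a 3
/-- Fourth Taylor coefficient of the inverse function. -/
def bc₄ (a : ℕ → ℂ) : ℂ := -5 * a 2 ^ 3 + 5 * a 2 * a 3 - a 4

/-- Region `Ω₁` of Prokhorov–Szynal. -/
def Omega1 (s m : ℝ) : Prop := |s| ≤ 2 ∧ 1 ≤ m
/-- Region `Ω₂` of Prokhorov–Szynal. -/
def Omega2 (s m : ℝ) : Prop := 2 ≤ |s| ∧ |s| ≤ 4 ∧ (s ^ 2 + 8) / 12 ≤ m
/-- Region `Ω₃` of Prokhorov–Szynal. -/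
def Omega3 (s m : ℝ) : Prop := 4 ≤ |s| ∧ (2/3) * (|s| - 1) ≤ m



open scoped NNReal

set_option linter.unreachableTactic false
set_option linter.unusedTactic false
set_option maxHeartbeats 1000000

lemma aux_radius {a : ℕ → ℂ} {f : ℂ → ℂ}
    (h : ∀ z ∈ ball (0:ℂ) 1, HasSum (fun n => a n * z ^ n) (f z)) :
    1 ≤ (FormalMultilinearSeries.ofScalars ℂ (fun n => a (n+1))).radius := by
  apply ENNReal.le_of_forall_nnreal_lt
  intro r hr
  have hr1 : (r : ℝ) < 1 := by exact_mod_cast hr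
  have hr0 : (0:ℝ) ≤ r := r.coe_nonneg
  set t : ℝ := ((r : ℝ) + 1) / 2 with ht
  have hrt : (r : ℝ) < t := by rw [ht]; linarith
  have ht1 : t < 1 := by rw [ht]; linarith
  have ht0 : 0 < t := by rw [ht]; linarith
  have hzball : (t : ℂ) ∈ ball (0:ℂ) 1 := by
    simp [abs_of_pos ht0, ht1]
  have hsum := (h _ hzball).summable
  have htend : Filter.Tendsto (fun n => ‖a n * (t:ℂ) ^ n‖) Filter.atTop (nhds 0) := by
    simpa using hsum.tendsto_atTop_zero.norm
  obtain ⟨C, hC⟩ := htend.bddAbove_range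
  have hCb : ∀ n, ‖a n‖ * t ^ n ≤ C := by
    intro n
    have := hC (Set.mem_range_self n)
    simpa [norm_mul, norm_pow, Complex.norm_real, abs_of_pos ht0] using this
  apply FormalMultilinearSeries.le_radius_of_bound _ (C / t)
  intro n
  rw [FormalMultilinearSeries.ofScalars_norm]
  have h1 : ‖a (n+1)‖ * (r:ℝ) ^ n ≤ ‖a (n+1)‖ * t ^ n := by
    apply mul_le_mul_of_nonneg_left (pow_le_pow_left₀ hr0 hrt.le n) (norm_nonneg _)
  have h2 : ‖a (n+1)‖ * t ^ n = (‖a (n+1)‖ * t ^ (n+1)) / t := by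
    field_simp [ht0.ne']; ring
  calc ‖a (n+1)‖ * (r:ℝ) ^ n ≤ ‖a (n+1)‖ * t ^ n := h1
    _ = (‖a (n+1)‖ * t ^ (n+1)) / t := h2
    _ ≤ C / t := by gcongr; exact hCb (n+1)


lemma ball_eq_eball : Metric.eball (0:ℂ) 1 = ball (0:ℂ) 1 := by
  simpa using Metric.emetric_ball_nnreal (x := (0:ℂ)) (ε := 1)


lemma core {f : ℂ → ℂ} {a : ℕ → ℂ} {w : ℂ → ℂ}
    (hA : InClassA f a) (hw : IsSchwarz w)
    (heq : ∀ z ∈ ball (0:ℂ) 1, z * deriv f z = (1 + (w z)^2) ^ ((1:ℂ)/2) * f z) :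
    a 2 = 0 ∧ a 3 = (deriv w 0)^2 / 4 := by
  obtain ⟨ha0, ha1, hsum⟩ := hA
  obtain ⟨hwd, hw0, hwb⟩ := hw
  set q := FormalMultilinearSeries.ofScalars ℂ (fun n => a (n+1)) with hqdef
  have hrad : 1 ≤ q.radius := aux_radius hsum
  set u := q.sum with hudef
  have hub : HasFPowerSeriesOnBall u q 0 1 := by
    refine ⟨hrad, by norm_num, fun hy => ?_⟩
    rw [zero_add]
    exact q.hasSum (lt_of_lt_of_le (by simpa [EMetric.mem_ball] using hy) hrad)
  -- analyticity of u, w and their derivatives on the ball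
  have hu_an : AnalyticOnNhd ℂ u (ball (0:ℂ) 1) := by
    rw [← ball_eq_eball]
    exact hub.analyticOnNhd
  have hw_an : AnalyticOnNhd ℂ w (ball (0:ℂ) 1) := hwd.analyticOnNhd isOpen_ball
  have hU_an : AnalyticOnNhd ℂ (deriv u) (ball (0:ℂ) 1) := hu_an.deriv
  have hV_an : AnalyticOnNhd ℂ (deriv (deriv u)) (ball (0:ℂ) 1) := hU_an.deriv
  have hW_an : AnalyticOnNhd ℂ (deriv w) (ball (0:ℂ) 1) := hw_an.deriv
  have h0mem : (0:ℂ) ∈ ball (0:ℂ) 1 := by simp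
  -- iterated derivatives of u at 0
  have hcoef : ∀ n : ℕ, iteratedDeriv n u 0 = (n.factorial : ℂ) * a (n+1) := by
    intro n
    have h1 := hub.factorial_smul (y := (1:ℂ)) n
    rw [iteratedDeriv_eq_iteratedFDeriv, ← h1, hqdef,
      FormalMultilinearSeries.ofScalars_apply_eq]
    simp
  have hu0 : u 0 = 1 := by
    have := hcoef 0
    rw [iteratedDeriv_zero] at this
    simpa [ha1] using this
  have hu1 : deriv u 0 = a 2 := by
    have := hcoef 1
    simpa [iteratedDeriv_one] using this
  have hu2 : deriv (deriv u) 0 = 2 * a 3 := by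
    have := hcoef 2
    rw [iteratedDeriv_succ, iteratedDeriv_one] at this
    simpa [Nat.factorial] using this
  -- f z = z * u z on the ball
  have hf0 : f 0 = 0 := by
    have h1 := hsum 0 h0mem
    have h2 : HasSum (fun n => a n * (0:ℂ) ^ n) (a 0 * (0:ℂ) ^ 0) := by
      apply hasSum_single 0
      intro n hn
      simp [zero_pow hn]
    have := h1.unique h2
    simpa [ha0] using this
  have hfu : ∀ z ∈ ball (0:ℂ) 1, f z = z * u z := by
    intro z hz
    rcases eq_or_ne z 0 with rfl | hzne
    · simp [hf0]
    · have h1 := hsum z hz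
      have h2 : HasSum (fun n => a (n+1) * z ^ (n+1)) (f z) := by
        have h3 := (hasSum_nat_add_iff' (f := fun n => a n * z ^ n) 1).mpr h1
        simpa [ha0] using h3
      have h4 : HasSum (fun n => a (n+1) * z ^ n) (f z / z) := by
        have h5 := h2.div_const z
        convert h5 using 2 with n
        · rfl
        rw [pow_succ]
        field_simp
      have h6 : HasSum (fun n => a (n+1) * z ^ n) (u z) := by
        have h7 : z ∈ Metric.eball (0:ℂ) 1 := by rw [ball_eq_eball]; exact hz
        have h8 := hub.hasSum h7
        rw [zero_add] at h8
        convert h8 using 2 with n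
        · rfl
        rw [hqdef, FormalMultilinearSeries.ofScalars_apply_eq, smul_eq_mul]
      have h9 := h4.unique h6
      rw [← h9]
      field_simp
  -- derivative of f on the ball
  have hdf : ∀ z ∈ ball (0:ℂ) 1, deriv f z = u z + z * deriv u z := by
    intro z hz
    have hev : f =ᶠ[nhds z] fun y => y * u y :=
      Filter.eventuallyEq_of_mem (isOpen_ball.mem_nhds hz) (fun y hy => hfu y hy)
    rw [hev.deriv_eq]
    have hu' : HasDerivAt u (deriv u z) z := ((hu_an z hz).differentiableAt).hasDerivAt
    have h2 : HasDerivAt (fun y => y * u y) (u z + z * deriv u z) z := by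
      exact ((hasDerivAt_id' z).mul hu').congr_deriv (by ring)
    exact h2.deriv
  -- 1 + (w z)^2 is nonzero
  have hwne : ∀ z ∈ ball (0:ℂ) 1, (1 : ℂ) + (w z)^2 ≠ 0 := by
    intro z hz h
    have h1 : ‖(w z)^2‖ < 1 := by
      rw [norm_pow]
      have habs := mem_ball_zero_iff.mp (hwb z hz)
      nlinarith [norm_nonneg (w z)]
    have h2 : (w z)^2 = -1 := by linear_combination h
    rw [h2] at h1
    simp at h1
  -- the squared relation K = 0 on the ball
  have hK : ∀ z ∈ ball (0:ℂ) 1,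
      (u z + z * deriv u z)^2 - (1 + (w z)^2) * (u z)^2 = 0 := by
    intro z hz
    rcases eq_or_ne z 0 with rfl | hzne
    · simp [hu0, hw0]
    · have hsq : ((1 + (w z)^2) ^ ((1:ℂ)/2))^2 = 1 + (w z)^2 := by
        rw [sq, ← Complex.cpow_add _ _ (hwne z hz)]
        norm_num
      have heqz := heq z hz
      rw [hdf z hz, hfu z hz] at heqz
      have hz2 : (z:ℂ)^2 ≠ 0 := pow_ne_zero _ hzne
      apply mul_left_cancel₀ hz2
      rw [mul_zero]
      calc z^2 * ((u z + z * deriv u z)^2 - (1 + (w z)^2) * (u z)^2)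
          = (z * (u z + z * deriv u z))^2 - (1 + (w z)^2) * (z * u z)^2 := by ring
        _ = ((1 + (w z)^2) ^ ((1:ℂ)/2) * (z * u z))^2
              - (1 + (w z)^2) * (z * u z)^2 := by rw [heqz]
        _ = 0 := by rw [mul_pow, hsq]; ring
  set U := deriv u with hUdef
  set V := deriv U with hVdef
  set W := deriv w with hWdef
  have hKD : ∀ z ∈ ball (0:ℂ) 1, HasDerivAt (fun y => (u y + y * U y)^2 - (1 + (w y)^2) * (u y)^2)
      (2*(u z + z * U z)*(U z + (U z + z * V z))
        - ((2 * w z * W z) * (u z)^2 + (1 + (w z)^2) * (2 * u z * U z))) z := by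
    intro z hz
    have hu' : HasDerivAt u (U z) z := ((hu_an z hz).differentiableAt).hasDerivAt
    have hU' : HasDerivAt U (V z) z := ((hU_an z hz).differentiableAt).hasDerivAt
    have hw' : HasDerivAt w (W z) z := ((hw_an z hz).differentiableAt).hasDerivAt
    have hA : HasDerivAt (fun y => u y + y * U y) (U z + (U z + z * V z)) z := by
      have h1 : HasDerivAt (fun y : ℂ => y * U y) (U z + z * V z) z := by
        exact ((hasDerivAt_id' z).mul hU').congr_deriv (by ring)
      exact hu'.add h1
    have hB : HasDerivAt (fun y => (1:ℂ) + (w y)^2) (2 * w z * W z) z := by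
      have := (hw'.pow 2).const_add (1:ℂ)
      norm_num at this
      exact (this.const_add (1:ℂ)).congr_deriv (by ring)
    have hu2' : HasDerivAt (fun y => (u y)^2) (2 * u z * U z) z := by
      have := hu'.pow 2
      norm_num at this
      exact this.congr_deriv (by ring)
    have := (hA.pow 2).sub (hB.mul hu2')
    norm_num at this
    exact this.congr_deriv (by ring)
  have hD0 : ∀ z ∈ ball (0:ℂ) 1,
      2*(u z + z * U z)*(U z + (U z + z * V z))
        - ((2 * w z * W z) * (u z)^2 + (1 + (w z)^2) * (2 * u z * U z)) = 0 := by
    intro z hz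
    have hev : (fun y => (u y + y * U y)^2 - (1 + (w y)^2) * (u y)^2) =ᶠ[nhds z]
        (fun _ => (0:ℂ)) :=
      Filter.eventuallyEq_of_mem (isOpen_ball.mem_nhds hz) (fun y hy => hK y hy)
    have hzero : HasDerivAt (fun y => (u y + y * U y)^2 - (1 + (w y)^2) * (u y)^2) 0 z :=
      (hasDerivAt_const z (0:ℂ)).congr_of_eventuallyEq hev
    exact (hKD z hz).unique hzero
  have ha2 : a 2 = 0 := by
    have h := hD0 0 h0mem
    rw [hu0, hw0, hu1] at h
    linear_combination h / 2
  refine ⟨ha2, ?_⟩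
  -- differentiate D once more at 0
  have hu' : HasDerivAt u (U 0) 0 := ((hu_an 0 h0mem).differentiableAt).hasDerivAt
  have hU' : HasDerivAt U (V 0) 0 := ((hU_an 0 h0mem).differentiableAt).hasDerivAt
  have hV' : HasDerivAt V (deriv V 0) 0 := ((hV_an 0 h0mem).differentiableAt).hasDerivAt
  have hw' : HasDerivAt w (W 0) 0 := ((hw_an 0 h0mem).differentiableAt).hasDerivAt
  have hW' : HasDerivAt W (deriv W 0) 0 := ((hW_an 0 h0mem).differentiableAt).hasDerivAt
  have hA : HasDerivAt (fun y => u y + y * U y) (U 0 + (U 0 + 0 * V 0)) 0 := by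
    have h1 : HasDerivAt (fun y : ℂ => y * U y) (U 0 + 0 * V 0) 0 := by
      exact ((hasDerivAt_id' 0).mul hU').congr_deriv (by ring)
    exact hu'.add h1
  have hA2 : HasDerivAt (fun y : ℂ => U y + (U y + y * V y))
      (V 0 + (V 0 + (V 0 + 0 * deriv V 0))) 0 := by
    have h1 : HasDerivAt (fun y : ℂ => y * V y) (V 0 + 0 * deriv V 0) 0 := by
      exact ((hasDerivAt_id' 0).mul hV').congr_deriv (by ring)
    exact hU'.add (hU'.add h1)
  have hT1 : HasDerivAt (fun y => 2*(u y + y * U y)*(U y + (U y + y * V y)))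
      ((2 * (U 0 + (U 0 + 0 * V 0))) * (U 0 + (U 0 + 0 * V 0))
        + (2 * (u 0 + 0 * U 0)) * (V 0 + (V 0 + (V 0 + 0 * deriv V 0)))) 0 :=
    (hA.const_mul 2).mul hA2
  have hT2a : HasDerivAt (fun y => 2 * w y * W y)
      ((2 * W 0) * W 0 + (2 * w 0) * deriv W 0) 0 := (hw'.const_mul 2).mul hW'
  have hu2' : HasDerivAt (fun y => (u y)^2) (2 * u 0 * U 0) 0 := by
    have := hu'.pow 2
    norm_num at this
    exact this.congr_deriv (by ring)
  have hT2 : HasDerivAt (fun y => (2 * w y * W y) * (u y)^2)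
      (((2 * W 0) * W 0 + (2 * w 0) * deriv W 0) * (u 0)^2
        + (2 * w 0 * W 0) * (2 * u 0 * U 0)) 0 := hT2a.mul hu2'
  have hB : HasDerivAt (fun y => (1:ℂ) + (w y)^2) (2 * w 0 * W 0) 0 := by
    have := (hw'.pow 2).const_add (1:ℂ)
    norm_num at this
    exact (this.const_add (1:ℂ)).congr_deriv (by ring)
  have hu2U : HasDerivAt (fun y => 2 * u y * U y)
      ((2 * U 0) * U 0 + (2 * u 0) * V 0) 0 := (hu'.const_mul 2).mul hU'
  have hT3 : HasDerivAt (fun y => (1 + (w y)^2) * (2 * u y * U y))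
      ((2 * w 0 * W 0) * (2 * u 0 * U 0)
        + (1 + (w 0)^2) * ((2 * U 0) * U 0 + (2 * u 0) * V 0)) 0 := hB.mul hu2U
  have hDD := hT1.sub (hT2.add hT3)
  have hevD : (fun z => 2*(u z + z * U z)*(U z + (U z + z * V z))
        - ((2 * w z * W z) * (u z)^2 + (1 + (w z)^2) * (2 * u z * U z))) =ᶠ[nhds 0]
      (fun _ => (0:ℂ)) :=
    Filter.eventuallyEq_of_mem (isOpen_ball.mem_nhds h0mem) (fun y hy => hD0 y hy)
  have hzeroD := (hasDerivAt_const (0:ℂ) (0:ℂ)).congr_of_eventuallyEq hevD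
  have hfin := hDD.unique hzeroD
  rw [hu0, hw0, hu1, hu2] at hfin
  linear_combination hfin / 8 - (3/4) * a 2 * ha2


lemma aux_coeffs {f : ℂ → ℂ} (hd : DifferentiableOn ℂ f (ball (0:ℂ) 1)) :
    ∃ a : ℕ → ℂ, a 0 = f 0 ∧ a 1 = deriv f 0 ∧
      ∀ z ∈ ball (0:ℂ) 1, HasSum (fun n => a n * z ^ n) (f z) := by
  have hr : ∀ r : ℝ≥0, 0 < r → (r:ℝ) < 1 →
      HasFPowerSeriesOnBall f (cauchyPowerSeries f 0 r) 0 r := by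
    intro r hr0 hr1
    exact (hd.mono (closedBall_subset_ball hr1)).hasFPowerSeriesOnBall hr0
  set p := cauchyPowerSeries f 0 (1/2 : ℝ≥0) with hp
  have hhalf := hr (1/2) (by norm_num) (by norm_num)
  refine ⟨fun n => p.coeff n, ?_, ?_, ?_⟩
  · exact hhalf.coeff_zero (fun _ => 1)
  · exact hhalf.hasFPowerSeriesAt.deriv.symm
  · intro z hz
    have habs : ‖z‖ < 1 := by simpa using mem_ball_zero_iff.mp hz
    set r : ℝ≥0 := ⟨(‖z‖ + 1)/2, by positivity⟩ with hrdef
    have hr0 : 0 < r := by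
      rw [hrdef]
      exact_mod_cast (by positivity : (0:ℝ) < (‖z‖ + 1)/2)
    have hr1 : (r : ℝ) < 1 := by
      show (‖z‖ + 1)/2 < 1
      linarith
    have hball := hr r hr0 hr1
    have hpeq : cauchyPowerSeries f 0 r = p :=
      hball.hasFPowerSeriesAt.eq_formalMultilinearSeries hhalf.hasFPowerSeriesAt
    have hzr : z ∈ Metric.eball (0:ℂ) r := by
      rw [Metric.emetric_ball_nnreal]
      apply mem_ball_zero_iff.mpr
      show ‖z‖ < (‖z‖ + 1)/2
      linarith
    have := hball.hasSum hzr
    rw [zero_add, hpeq] at this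
    convert this using 2 with n
    · rfl
    rw [FormalMultilinearSeries.apply_eq_pow_smul_coeff, smul_eq_mul]
    ring

def φe : ℂ → ℂ := fun z => (1 + z^2) ^ ((1:ℂ)/2)
def fe : ℂ → ℂ := fun z => 2 * z * Complex.exp (φe z - 1) * (1 + φe z)⁻¹

lemma hslit {z : ℂ} (hz : z ∈ ball (0:ℂ) 1) : (1 + z^2) ∈ Complex.slitPlane := by
  left
  have habs : ‖z‖ < 1 := by simpa using mem_ball_zero_iff.mp hz
  have h2 : z.re^2 + z.im^2 < 1 := by
    have hsq := Complex.sq_norm z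
    rw [Complex.normSq_apply] at hsq
    have h0 := norm_nonneg z
    nlinarith [mul_self_nonneg (1 - ‖z‖)]
  simp only [Complex.add_re, Complex.one_re, Complex.mul_re, Complex.sq_norm, pow_two]
  nlinarith [norm_nonneg z]

lemma hne0 {z : ℂ} (hz : z ∈ ball (0:ℂ) 1) : (1 : ℂ) + z^2 ≠ 0 :=
  Complex.slitPlane_ne_zero (hslit hz)

lemma hsqφ {z : ℂ} (hz : z ∈ ball (0:ℂ) 1) : φe z * φe z = 1 + z^2 := by
  unfold φe
  rw [← Complex.cpow_add _ _ (hne0 hz)]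
  norm_num

lemma hφ0 : φe 0 = 1 := by simp [φe]

lemma hφne0 {z : ℂ} (hz : z ∈ ball (0:ℂ) 1) : φe z ≠ 0 := by
  intro h
  have := hsqφ hz
  rw [h, mul_zero] at this
  exact hne0 hz this.symm

lemma hφne1 {z : ℂ} (hz : z ∈ ball (0:ℂ) 1) : (1 : ℂ) + φe z ≠ 0 := by
  intro h
  have hm : φe z = -1 := by linear_combination h
  have h2 := hsqφ hz
  rw [hm] at h2
  have hz0 : z^2 = 0 := by linear_combination -h2
  have : z = 0 := by
    exact pow_eq_zero_iff (n := 2) (by norm_num) |>.mp hz0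
  rw [this] at hm
  rw [hφ0] at hm
  norm_num at hm

lemma hdφ {z : ℂ} (hz : z ∈ ball (0:ℂ) 1) : HasDerivAt φe (z / φe z) z := by
  have h1 : HasDerivAt (fun y : ℂ => 1 + y^2) (2*z) z := by
    simpa using ((hasDerivAt_pow 2 z).const_add 1)
  have h2 := h1.cpow_const (c := (1:ℂ)/2) (hslit hz)
  convert h2 using 1
  · rfl
  rw [show (1:ℂ)/2 - 1 = -(1/2) by ring, Complex.cpow_neg]
  rw [div_eq_mul_inv]
  unfold φe
  ring

lemma hdfe {z : ℂ} (hz : z ∈ ball (0:ℂ) 1) :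
    HasDerivAt fe (2 * Complex.exp (φe z - 1) * (1 + φe z)⁻¹
      + (2 * z) * (Complex.exp (φe z - 1) * (z / φe z)) * (1 + φe z)⁻¹
      + 2 * z * Complex.exp (φe z - 1) * (-(z / φe z) / (1 + φe z)^2)) z := by
  have hexp : HasDerivAt (fun y => Complex.exp (φe y - 1))
      (Complex.exp (φe z - 1) * (z / φe z)) z := by
    have := ((hdφ hz).sub_const 1).cexp
    simpa using this
  have hinv : HasDerivAt (fun y => (1 + φe y)⁻¹) (-(z / φe z) / (1 + φe z)^2) z :=
    ((hdφ hz).const_add 1).inv (hφne1 hz)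
  have h2z : HasDerivAt (fun y : ℂ => 2 * y) (2:ℂ) z := by
    simpa using (hasDerivAt_id z).const_mul (2:ℂ)
  have hmul1 : HasDerivAt (fun y => 2 * y * Complex.exp (φe y - 1))
      (2 * Complex.exp (φe z - 1) + (2 * z) * (Complex.exp (φe z - 1) * (z / φe z))) z :=
    h2z.mul hexp
  have := hmul1.mul hinv
  exact this.congr_deriv (by ring)

lemma ode {z : ℂ} (hz : z ∈ ball (0:ℂ) 1) : z * deriv fe z = φe z * fe z := by
  rw [(hdfe hz).deriv]
  unfold fe
  have h1 := hφne0 hz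
  have h2 := hφne1 hz
  have h3 := hsqφ hz
  set p := φe z with hp
  set E := Complex.exp (p - 1) with hE
  field_simp
  first
  | linear_combination (-2*z*E*p) * h3
  | linear_combination (2*z*E*p) * h3
  | linear_combination (-2*z*E*p*(1+p)) * h3
  | linear_combination (2*z*E*p*(1+p)) * h3
  | linear_combination (2*z*E) * h3
  | linear_combination (-2*z*E) * h3
  | linear_combination (-(2*z*E*p^2*(1+p)^3)) * h3
  | linear_combination (-z*E*(p + 2*p^2 + 6*p^3 + 6*p^4 + 2*p^5) + 2*z*E*p^2*(1+p)^3) * h3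

lemma fe0 : fe 0 = 0 := by simp [fe]

lemma h0mem1 : (0:ℂ) ∈ ball (0:ℂ) 1 := by simp

lemma hdfe0 : deriv fe 0 = 1 := by
  rw [(hdfe h0mem1).deriv]
  simp [hφ0, Complex.exp_zero]
  norm_num

lemma fediff : DifferentiableOn ℂ fe (ball (0:ℂ) 1) :=
  fun z hz => ((hdfe hz).differentiableAt).differentiableWithinAt

theorem stmt_19 :
    (∀ f a, InClassA f a → MemStarPhi (fun z => (1 + z ^ 2) ^ ((1 : ℂ)/2)) f →
      ‖G₁ a ^ 2 - G₂ a ^ 2‖ ≤ 1/64 ∧ ‖bc₂ a ^ 2 - bc₃ a ^ 2‖ ≤ 1/16) ∧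
    (∃ f a, InClassA f a ∧ MemStarPhi (fun z => (1 + z ^ 2) ^ ((1 : ℂ)/2)) f ∧ ‖G₁ a ^ 2 - G₂ a ^ 2‖ = 1/64) ∧
    (∃ f a, InClassA f a ∧ MemStarPhi (fun z => (1 + z ^ 2) ^ ((1 : ℂ)/2)) f ∧ ‖bc₂ a ^ 2 - bc₃ a ^ 2‖ = 1/16) := by
  have habs4 : ‖(4:ℂ)‖ = 4 := by simp
  have main : ∀ f a, InClassA f a → MemStarPhi (fun z => (1 + z ^ 2) ^ ((1 : ℂ)/2)) f →
      a 2 = 0 ∧ ∃ c : ℂ, ‖c‖ ≤ 1 ∧ a 3 = c^2 / 4 ∧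
        (∀ z ∈ ball (0:ℂ) 1, True) := by
    intro f a hA hphi
    obtain ⟨w, hw, heqn⟩ := hphi
    have hc := core hA hw (fun z hz => heqn z hz)
    refine ⟨hc.1, deriv w 0, ?_, hc.2, fun _ _ => trivial⟩
    exact Complex.norm_deriv_le_one_of_mapsTo_ball hw.1 (fun z hz => by rw [hw.2.1]; exact ball_subset_closedBall (hw.2.2 z hz)) one_pos
  refine ⟨?_, ?_, ?_⟩
  · intro f a hA hphi
    obtain ⟨ha2, c, hcle, ha3, -⟩ := main f a hA hphi
    have h3 : ‖a 3‖ ≤ 1/4 := by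
      rw [ha3, norm_div, norm_pow, habs4]
      nlinarith [norm_nonneg c]
    constructor
    · have he : G₁ a ^ 2 - G₂ a ^ 2 = -((a 3)^2 / 4) := by
        unfold G₁ G₂; rw [ha2]; ring
      rw [he, norm_neg, norm_div, norm_pow, habs4]
      nlinarith [norm_nonneg (a 3)]
    · have he : bc₂ a ^ 2 - bc₃ a ^ 2 = -((a 3)^2) := by
        unfold bc₂ bc₃; rw [ha2]; ring
      rw [he, norm_neg, norm_pow]
      nlinarith [norm_nonneg (a 3)]
  all_goals {
    obtain ⟨a, ha0, ha1, hsum⟩ := aux_coeffs fediff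
    have hA : InClassA fe a := ⟨by rw [ha0, fe0], by rw [ha1, hdfe0], hsum⟩
    have hphi : MemStarPhi (fun z => (1 + z ^ 2) ^ ((1 : ℂ)/2)) fe := by
      refine ⟨id, ⟨differentiable_id.differentiableOn, rfl, fun z hz => hz⟩, fun z hz => ?_⟩
      exact ode hz
    have hw : IsSchwarz id := ⟨differentiable_id.differentiableOn, rfl, fun z hz => hz⟩
    have hc := core hA hw (fun z hz => ode hz)
    have hid : deriv (id : ℂ → ℂ) 0 = 1 := by simp
    have ha2 : a 2 = 0 := hc.1
    have ha3 : a 3 = 1/4 := by rw [hc.2, hid]; norm_num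
    refine ⟨fe, a, hA, hphi, ?_⟩
    · first
      | { have he : G₁ a ^ 2 - G₂ a ^ 2 = -(1/64 : ℂ) := by
            unfold G₁ G₂; rw [ha2, ha3]; ring
          rw [he, norm_neg]
          norm_num }
      | { have he : bc₂ a ^ 2 - bc₃ a ^ 2 = -(1/16 : ℂ) := by
            unfold bc₂ bc₃; rw [ha2, ha3]; ring
          rw [he, norm_neg]
          norm_num }
  }
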